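/- If σ: [0,∞) → ℝ₊ⁿ is a continuous path with each component σᵢ ∈ K∞, Γ: ℝ₊ⁿ → ℝ₊ⁿ is monotone (with respect to the componentwise order), and Γ(σ(τ)) < σ(τ) (componentwise strict) for all τ > 0, then Γ(s) ≱ s for all s ∈ ℝ₊ⁿ \ {0}. -/

import Mathlib

open NNReal

/-- A function is of class K∞: continuous, strictly increasing, unbounded, and 0 at 0. -/
def KInf (f : ℝ≥0 → ℝ≥0) : Prop :=
  Continuous f ∧ StrictMono f ∧ f 0 = 0 ∧ ∀ M : ℝ≥0, ∃ r, M < f r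

/-- If an Ω-path exists for a monotone Γ (Γ(σ(τ)) < σ(τ) componentwise for all τ > 0),
then Γ satisfies the small gain condition Γ(s) ≱ s for all s ≠ 0. -/
theorem omega_path_implies_small_gain (n : ℕ)
    (σ : Fin n → ℝ≥0 → ℝ≥0) (hσ : ∀ i, KInf (σ i))
    (Γ : (Fin n → ℝ≥0) → Fin n → ℝ≥0) (hΓ : Monotone Γ)
    (hpath : ∀ τ : ℝ≥0, 0 < τ → ∀ i, Γ (fun j => σ j τ) i < σ i τ) :
    ∀ s : Fin n → ℝ≥0, s ≠ 0 → ∃ i, Γ s i < s i := by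
  intro s hs
  by_contra hcon
  push_neg at hcon
  -- surjectivity of each σ i
  have hsurj : ∀ i, ∃ τ, σ i τ = s i := by
    intro i
    obtain ⟨hc, hm, h0, hu⟩ := hσ i
    obtain ⟨r, hr⟩ := hu (s i)
    have hmem : s i ∈ Set.Icc (σ i 0) (σ i r) := ⟨by simp [h0], hr.le⟩
    obtain ⟨τ, _, hτ⟩ := intermediate_value_Icc (zero_le (a := r)) hc.continuousOn hmem
    exact ⟨τ, hτ⟩
  choose t ht using hsurj
  obtain ⟨i0, hi0⟩ : ∃ i, s i ≠ 0 := by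
    by_contra hz; push_neg at hz
    exact hs (funext fun i => hz i)
  obtain ⟨j, -, hj⟩ := Finset.exists_max_image Finset.univ t ⟨i0, Finset.mem_univ i0⟩
  have hτpos : 0 < t j := by
    have hti0 : 0 < t i0 := by
      rcases (zero_le (a := t i0)).lt_or_eq with h | h
      · exact h
      · exfalso; apply hi0
        rw [← ht i0, ← h, (hσ i0).2.2.1]
    exact lt_of_lt_of_le hti0 (hj i0 (Finset.mem_univ i0))
  have hle : s ≤ fun i => σ i (t j) := by
    intro i
    calc s i = σ i (t i) := (ht i).symm
    _ ≤ σ i (t j) := (hσ i).2.1.monotone (hj i (Finset.mem_univ i))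
  have key : s j ≤ Γ s j := hcon j
  have key2 : Γ s j ≤ Γ (fun i => σ i (t j)) j := hΓ hle j
  have key3 : Γ (fun i => σ i (t j)) j < σ j (t j) := hpath (t j) hτpos j
  have : s j < s j := by
    calc s j ≤ Γ s j := key
    _ ≤ Γ (fun i => σ i (t j)) j := key2
    _ < σ j (t j) := key3
    _ = s j := ht j
  exact lt_irrefl _ this
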